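/- Let η ∈ (0,1) be a constant and take ε ∈ (0,η]. Then every eigenvalue λ (over ℂ) of P_ε⁻¹L satisfies |λ − 1| ≤ ε/(1−η). -/

import Mathlib

open Matrix

/-- The all-at-once block lower bidiagonal matrix `L` whose `(i,j)`-th `J × J`
block equals `A₀` if `i = j`, `−M` if `i = j + 1`, and `0` otherwise. -/
def Lmat (N J : ℕ) (A₀ M : Matrix (Fin J) (Fin J) ℝ) :
    Matrix (Fin N × Fin J) (Fin N × Fin J) ℝ :=
  Matrix.of fun p q =>
    if p.1 = q.1 then A₀ p.2 q.2
    else if (p.1 : ℕ) = (q.1 : ℕ) + 1 then -M p.2 q.2 else 0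

/-- `E_i = e_i ⊗ I_J`, where `e_i` is the `i`-th standard basis vector of `ℝ^N`. -/
def Emat (N J : ℕ) (i : Fin N) : Matrix (Fin N × Fin J) (Fin J) ℝ :=
  Matrix.of fun p y => if p.1 = i ∧ p.2 = y then 1 else 0

/-- The block `ε`-circulant preconditioner `P_ε`, agreeing with `L` in every
block except that the top-right `(1,N)`-th `J × J` block equals `−εM`;
equivalently `P_ε = L − ε E₁ M E_Nᵀ`. -/
noncomputable def Pmat (N J : ℕ) (hN : 0 < N) (A₀ M : Matrix (Fin J) (Fin J) ℝ)
    (ε : ℝ) : Matrix (Fin N × Fin J) (Fin N × Fin J) ℝ :=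
  Lmat N J A₀ M -
    ε • (Emat N J ⟨0, hN⟩ * M * (Emat N J ⟨N - 1, Nat.sub_lt hN Nat.one_pos⟩)ᵀ)

section Helpers

open Finset

lemma mem_spectrum_iff_exists' {n : Type*} [Fintype n] [DecidableEq n] {𝕜 : Type*} [Field 𝕜]
    (B : Matrix n n 𝕜) (lam : 𝕜) :
    lam ∈ spectrum 𝕜 B ↔ ∃ v, v ≠ 0 ∧ B *ᵥ v = lam • v := by
  rw [spectrum.mem_iff, Matrix.isUnit_iff_isUnit_det, isUnit_iff_ne_zero, not_ne_iff,
    ← Matrix.exists_mulVec_eq_zero_iff]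
  constructor
  · rintro ⟨v, hv, h⟩
    refine ⟨v, hv, ?_⟩
    rw [Matrix.sub_mulVec] at h
    have h2 : (algebraMap 𝕜 (Matrix n n 𝕜) lam) *ᵥ v = lam • v := by
      ext i; simp [Matrix.algebraMap_eq_diagonal, Matrix.mulVec_diagonal]
    rw [h2, sub_eq_zero] at h
    exact h.symm
  · rintro ⟨v, hv, h⟩
    refine ⟨v, hv, ?_⟩
    rw [Matrix.sub_mulVec]
    have h2 : (algebraMap 𝕜 (Matrix n n 𝕜) lam) *ᵥ v = lam • v := by
      ext i; simp [Matrix.algebraMap_eq_diagonal, Matrix.mulVec_diagonal]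
    rw [h2, h, sub_self]

lemma mapC_mul {n : Type*} [Fintype n] [DecidableEq n] (A B : Matrix n n ℝ) :
    (A * B).map Complex.ofReal = A.map Complex.ofReal * B.map Complex.ofReal := by
  have h : Complex.ofReal = ⇑Complex.ofRealHom := rfl
  rw [h]
  exact Matrix.map_mul

lemma mapC_one {n : Type*} [Fintype n] [DecidableEq n] :
    (1 : Matrix n n ℝ).map Complex.ofReal = 1 := by
  ext p q
  simp [Matrix.map_apply, Matrix.one_apply, apply_ite Complex.ofReal]

lemma mapC_pow {n : Type*} [Fintype n] [DecidableEq n] (A : Matrix n n ℝ) (k : ℕ) :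
    (A ^ k).map Complex.ofReal = (A.map Complex.ofReal) ^ k := by
  induction k with
  | zero => simpa using mapC_one
  | succ m ih => rw [pow_succ, pow_succ, mapC_mul, ih]

lemma mapC_inv {n : Type*} [Fintype n] [DecidableEq n] (A : Matrix n n ℝ)
    (hA : IsUnit A.det) :
    (A⁻¹).map Complex.ofReal = (A.map Complex.ofReal)⁻¹ := by
  refine (Matrix.inv_eq_left_inv ?_).symm
  rw [← mapC_mul, Matrix.nonsing_inv_mul _ hA, mapC_one]

lemma mapC_det_isUnit {n : Type*} [Fintype n] [DecidableEq n] {A : Matrix n n ℝ}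
    (hA : IsUnit A.det) : IsUnit (A.map Complex.ofReal).det := by
  have h : (Complex.ofRealHom : ℝ →+* ℂ) A.det = (A.map Complex.ofReal).det :=
    RingHom.map_det _ _
  rw [isUnit_iff_ne_zero, ← h]
  simpa [Complex.ofReal_eq_zero, isUnit_iff_ne_zero] using hA

lemma quad_real {J : ℕ} (S : Matrix (Fin J) (Fin J) ℝ) (hS : S.IsHermitian)
    (u : Fin J → ℂ) :
    star u ⬝ᵥ ((S.map Complex.ofReal) *ᵥ u) =
      Complex.ofReal ((fun i => (u i).re) ⬝ᵥ S *ᵥ (fun i => (u i).re)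
        + (fun i => (u i).im) ⬝ᵥ S *ᵥ (fun i => (u i).im)) := by
  have hsym : ∀ i j, S i j = S j i := fun i j => by
    have := congrFun (congrFun hS j) i
    simpa [Matrix.conjTranspose_apply] using this
  have key : ∀ (x y : Fin J → ℝ),
      ∑ i, x i * ∑ j, S i j * y j = ∑ i, ∑ j, S i j * x i * y j := by
    intro x y
    refine Finset.sum_congr rfl fun i _ => ?_
    rw [Finset.mul_sum]
    exact Finset.sum_congr rfl fun j _ => by ring
  apply Complex.ext
  · simp only [dotProduct, mulVec, Pi.star_apply, Complex.star_def, Matrix.map_apply,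
      Complex.ofReal_re, Complex.re_sum, Complex.mul_re, Complex.mul_im, Complex.im_sum,
      Complex.conj_re, Complex.conj_im, Complex.ofReal_im, zero_mul, mul_zero, sub_zero,
      zero_add, add_zero, neg_mul, sub_neg_eq_add]
    rw [Finset.sum_add_distrib]
  · simp only [dotProduct, mulVec, Pi.star_apply, Complex.star_def, Matrix.map_apply,
      Complex.ofReal_im, Complex.re_sum, Complex.mul_re, Complex.mul_im, Complex.im_sum,
      Complex.conj_re, Complex.conj_im, Complex.ofReal_re, zero_mul, mul_zero, sub_zero,
      zero_add, add_zero, neg_mul]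
    rw [Finset.sum_add_distrib, Finset.sum_neg_distrib, key, key, add_neg_eq_zero,
      Finset.sum_comm]
    refine Finset.sum_congr rfl fun i _ => Finset.sum_congr rfl fun j _ => ?_
    rw [hsym i j]; ring

lemma quad_pos {J : ℕ} {S : Matrix (Fin J) (Fin J) ℝ} (hS : S.PosDef)
    {u : Fin J → ℂ} (hu : u ≠ 0) :
    ∃ s : ℝ, 0 < s ∧ star u ⬝ᵥ ((S.map Complex.ofReal) *ᵥ u) = Complex.ofReal s := by
  refine ⟨_, ?_, quad_real S hS.1 u⟩
  set a : Fin J → ℝ := fun i => (u i).re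
  set b : Fin J → ℝ := fun i => (u i).im
  have hab : a ≠ 0 ∨ b ≠ 0 := by
    by_contra h
    push_neg at h
    apply hu
    funext i
    have h1 := congrFun h.1 i
    have h2 := congrFun h.2 i
    simp only [a, b, Pi.zero_apply] at h1 h2
    exact Complex.ext h1 h2
  rcases hab with h | h
  · exact add_pos_of_pos_of_nonneg (by simpa using hS.dotProduct_mulVec_pos h)
      (by simpa using hS.posSemidef.dotProduct_mulVec_nonneg b)
  · exact add_pos_of_nonneg_of_pos (by simpa using hS.posSemidef.dotProduct_mulVec_nonneg a)
      (by simpa using hS.dotProduct_mulVec_pos h)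

lemma posdef_smul' {J : ℕ} {K : Matrix (Fin J) (Fin J) ℝ} (hK : K.PosDef) {τ : ℝ}
    (hτ : 0 < τ) : (τ • K).PosDef := by
  refine ⟨?_, fun x hx => ?_⟩
  · have h := hK.1
    simp only [Matrix.IsHermitian] at h ⊢
    rw [Matrix.conjTranspose_smul, h]
    simp
  · exact (hK.smul hτ).2 hx

lemma posdef_add' {J : ℕ} {A B : Matrix (Fin J) (Fin J) ℝ} (hA : A.PosDef)
    (hB : B.PosDef) : (A + B).PosDef := by
  refine ⟨hA.1.add hB.1, fun x hx => ?_⟩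
  exact (hA.add hB).2 hx

lemma spec_T {J N : ℕ} (hN : 0 < N) {M K A₀ : Matrix (Fin J) (Fin J) ℝ}
    (hM : M.PosDef) (hK : K.PosDef) {τ : ℝ} (hτ : 0 < τ) (hA₀ : A₀ = M + τ • K) :
    ∀ μ ∈ spectrum ℂ (((A₀⁻¹ * M) ^ N).map Complex.ofReal),
      ∃ r : ℝ, 0 < r ∧ r < 1 ∧ μ = Complex.ofReal r := by
  intro μ hμ
  have hA : A₀.PosDef := hA₀ ▸ posdef_add' hM (posdef_smul' hK hτ)
  have hAdet : IsUnit A₀.det := hA.det_pos.ne'.isUnit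
  have hmap : ((A₀⁻¹ * M) ^ N).map Complex.ofReal
      = ((A₀.map Complex.ofReal)⁻¹ * M.map Complex.ofReal) ^ N := by
    rw [mapC_pow, mapC_mul, mapC_inv _ hAdet]
  rw [hmap, spectrum.map_pow_of_pos _ hN] at hμ
  obtain ⟨t, ht, rfl⟩ := hμ
  rw [mem_spectrum_iff_exists'] at ht
  obtain ⟨u, hu, hGu⟩ := ht
  set Ac := A₀.map Complex.ofReal
  set Mc := M.map Complex.ofReal
  have hAcdet : IsUnit Ac.det := mapC_det_isUnit hAdet
  have hMu : Mc *ᵥ u = t • (Ac *ᵥ u) := by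
    have h1 : Ac *ᵥ ((Ac⁻¹ * Mc) *ᵥ u) = Mc *ᵥ u := by
      rw [Matrix.mulVec_mulVec, ← Matrix.mul_assoc, Matrix.mul_nonsing_inv _ hAcdet,
        Matrix.one_mul]
    rw [← h1, hGu, Matrix.mulVec_smul]
  obtain ⟨sM, hsM, hqM⟩ := quad_pos hM hu
  obtain ⟨sA, hsA, hqA⟩ := quad_pos hA hu
  have hDpd : (A₀ - M).PosDef := by
    have h : A₀ - M = τ • K := by rw [hA₀]; abel
    rw [h]; exact posdef_smul' hK hτ
  obtain ⟨sD, hsD, hqD⟩ := quad_pos hDpd hu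
  have hmapsub : (A₀ - M).map Complex.ofReal = Ac - Mc := by
    ext p q; simp [Matrix.map_apply, Ac, Mc]
  have hsub : (sD : ℂ) = (sA : ℂ) - (sM : ℂ) := by
    rw [← hqD, ← hqA, ← hqM, hmapsub, Matrix.sub_mulVec, dotProduct_sub]
  have hDlt : sM < sA := by
    have h : sD = sA - sM := by exact_mod_cast hsub
    linarith
  have ht_eq : (sM : ℂ) = t * (sA : ℂ) := by
    rw [← hqM, ← hqA, hMu, dotProduct_smul, smul_eq_mul]
  have ht_val : t = Complex.ofReal (sM / sA) := by
    rw [Complex.ofReal_div]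
    have hsAne : (sA : ℂ) ≠ 0 := Complex.ofReal_ne_zero.mpr hsA.ne'
    field_simp
    linear_combination -ht_eq
  refine ⟨(sM / sA) ^ N, pow_pos (div_pos hsM hsA) N, ?_, ?_⟩
  · exact pow_lt_one₀ (le_of_lt (div_pos hsM hsA)) ((div_lt_one hsA).mpr hDlt) hN.ne'
  · show (fun x => x ^ N) t = _
    rw [ht_val]
    simp [Complex.ofReal_pow]

lemma EME_apply {N J : ℕ} (M : Matrix (Fin J) (Fin J) ℝ) (i0 i1 : Fin N)
    (p q : Fin N × Fin J) :
    (Emat N J i0 * M * (Emat N J i1)ᵀ) p q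
      = if p.1 = i0 ∧ q.1 = i1 then M p.2 q.2 else 0 := by
  simp only [Matrix.mul_apply, Emat, Matrix.transpose_apply, Matrix.of_apply, ite_and,
    ite_mul, one_mul, zero_mul, mul_ite, mul_one, mul_zero]
  by_cases h0 : p.1 = i0 <;> by_cases h1 : q.1 = i1 <;>
    simp [h0, h1, Finset.sum_ite_eq, Finset.sum_ite_eq']

lemma X_mulVec {N J : ℕ} (M : Matrix (Fin J) (Fin J) ℝ) (i0 i1 : Fin N)
    (v : Fin N × Fin J → ℂ) (i : Fin N) (x : Fin J) :
    (((Emat N J i0 * M * (Emat N J i1)ᵀ).map Complex.ofReal) *ᵥ v) (i, x)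
      = if i = i0 then ((M.map Complex.ofReal) *ᵥ fun y => v (i1, y)) x else 0 := by
  simp only [Matrix.mulVec, dotProduct, Matrix.map_apply, EME_apply,
    Fintype.sum_prod_type, apply_ite Complex.ofReal, Complex.ofReal_zero, ite_mul, zero_mul]
  by_cases h0 : i = i0
  · simp [h0, Finset.sum_ite_eq, Finset.sum_ite_eq']
  · simp [h0]

lemma L_mulVec {N J : ℕ} (A₀ M : Matrix (Fin J) (Fin J) ℝ)
    (v : Fin N × Fin J → ℂ) (i : Fin N) (x : Fin J) :
    (((Lmat N J A₀ M).map Complex.ofReal) *ᵥ v) (i, x)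
      = ((A₀.map Complex.ofReal) *ᵥ fun y => v (i, y)) x
        - ∑ k : Fin N, (if (i : ℕ) = (k : ℕ) + 1
            then ((M.map Complex.ofReal) *ᵥ fun y => v (k, y)) x else 0) := by
  simp only [Matrix.mulVec, dotProduct, Matrix.map_apply, Lmat, Matrix.of_apply,
    Fintype.sum_prod_type]
  have hterm : ∀ k : Fin N,
      (∑ y : Fin J, Complex.ofReal (if i = k then A₀ x y
          else if (i : ℕ) = (k : ℕ) + 1 then -M x y else 0) * v (k, y))
      = (if i = k then ∑ y, (A₀ x y : ℂ) * v (k, y) else 0)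
        + (if (i : ℕ) = (k : ℕ) + 1 then ∑ y, -((M x y : ℂ)) * v (k, y) else 0) := by
    intro k
    by_cases h : i = k
    · have hne : ¬ ((i : ℕ) = (k : ℕ) + 1) := by subst h; omega
      simp [h, hne]
    · by_cases h2 : (i : ℕ) = (k : ℕ) + 1 <;> simp [h, h2]
  rw [Finset.sum_congr rfl fun k _ => hterm k, Finset.sum_add_distrib,
    Finset.sum_ite_eq Finset.univ i _]
  simp only [Finset.mem_univ, if_true]
  rw [sub_eq_add_neg, ← Finset.sum_neg_distrib]
  congr 1
  refine Finset.sum_congr rfl fun k _ => ?_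
  by_cases h2 : (i : ℕ) = (k : ℕ) + 1 <;>
    simp [h2, neg_mul, Finset.sum_neg_distrib]

lemma master {N J : ℕ} (hN : 0 < N) {M K A₀ : Matrix (Fin J) (Fin J) ℝ}
    (hM : M.PosDef) (hK : K.PosDef) {τ : ℝ} (hτ : 0 < τ) (hA₀ : A₀ = M + τ • K)
    (c : ℂ) (v : Fin N × Fin J → ℂ) (hv : v ≠ 0)
    (heq : ((Lmat N J A₀ M).map Complex.ofReal) *ᵥ v
      = c • (((Emat N J ⟨0, hN⟩ * M *
          (Emat N J ⟨N - 1, Nat.sub_lt hN Nat.one_pos⟩)ᵀ).map Complex.ofReal) *ᵥ v)) :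
    ∃ r : ℝ, 0 < r ∧ r < 1 ∧ c * r = 1 := by
  classical
  set i0 : Fin N := ⟨0, hN⟩ with hi0
  set i1 : Fin N := ⟨N - 1, Nat.sub_lt hN Nat.one_pos⟩ with hi1
  have hA : A₀.PosDef := hA₀ ▸ posdef_add' hM (posdef_smul' hK hτ)
  have hAdet : IsUnit A₀.det := hA.det_pos.ne'.isUnit
  set Ac := A₀.map Complex.ofReal with hAc
  set Mc := M.map Complex.ofReal with hMc
  have hAcdet : IsUnit Ac.det := mapC_det_isUnit hAdet
  set G : Matrix (Fin J) (Fin J) ℂ := Ac⁻¹ * Mc with hG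
  set vb : Fin N → (Fin J → ℂ) := fun k y => v (k, y) with hvb
  have hinv : ∀ (a b : Fin J → ℂ), Ac *ᵥ a = b → a = Ac⁻¹ *ᵥ b := by
    intro a b h
    rw [← h, Matrix.mulVec_mulVec, Matrix.nonsing_inv_mul _ hAcdet, Matrix.one_mulVec]
  have hrow : ∀ (i : Fin N) (x : Fin J),
      (Ac *ᵥ vb i) x
        - (∑ k : Fin N, if (i : ℕ) = (k : ℕ) + 1 then (Mc *ᵥ vb k) x else 0)
      = if i = i0 then c * (Mc *ᵥ vb i1) x else 0 := by
    intro i x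
    have h := congrFun heq (i, x)
    rw [L_mulVec, Pi.smul_apply, X_mulVec M i0 i1 v i x, smul_eq_mul, mul_ite, mul_zero] at h
    exact h
  have hstep : ∀ (m : ℕ) (hm : m + 1 < N),
      vb ⟨m + 1, hm⟩ = G *ᵥ vb ⟨m, Nat.lt_of_succ_lt hm⟩ := by
    intro m hm
    rw [hG, ← Matrix.mulVec_mulVec]
    apply hinv
    funext x
    have h := hrow ⟨m + 1, hm⟩ x
    have h0 : (⟨m + 1, hm⟩ : Fin N) ≠ i0 := by
      intro hcontra
      have h' := congrArg (Fin.val) hcontra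
      simp [hi0] at h'
    rw [if_neg h0] at h
    have hiff : ∀ k : Fin N, (((⟨m + 1, hm⟩ : Fin N) : ℕ) = (k : ℕ) + 1)
        ↔ (k = ⟨m, Nat.lt_of_succ_lt hm⟩) := by
      intro k
      constructor
      · intro hh
        apply Fin.ext
        simp only [Fin.val_mk] at hh ⊢
        omega
      · intro hh
        subst hh
        simp
    have hsum : (∑ k : Fin N, if ((⟨m + 1, hm⟩ : Fin N) : ℕ) = (k : ℕ) + 1
        then (Mc *ᵥ vb k) x else 0) = (Mc *ᵥ vb ⟨m, Nat.lt_of_succ_lt hm⟩) x := by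
      rw [Finset.sum_congr rfl (fun k _ => if_congr (hiff k) rfl rfl),
        Finset.sum_ite_eq' Finset.univ _ (fun k => (Mc *ᵥ vb k) x)]
      simp
    rw [hsum, sub_eq_zero] at h
    exact h
  have hbase : vb i0 = c • (G *ᵥ vb i1) := by
    have h : Ac *ᵥ vb i0 = c • (Mc *ᵥ vb i1) := by
      funext x
      have h := hrow i0 x
      have hsum : (∑ k : Fin N, if ((i0 : Fin N) : ℕ) = (k : ℕ) + 1
          then (Mc *ᵥ vb k) x else 0) = 0 := by
        apply Finset.sum_eq_zero
        intro k _
        rw [if_neg]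
        simp [hi0]
      rw [hsum, sub_zero, if_pos rfl] at h
      simpa using h
    have h2 := hinv _ _ h
    rw [h2, Matrix.mulVec_smul, Matrix.mulVec_mulVec, hG]
  have hpow : ∀ (m : ℕ) (hm : m < N), vb ⟨m, hm⟩ = (G ^ m) *ᵥ vb i0 := by
    intro m
    induction m with
    | zero => intro hm; simp [Matrix.one_mulVec, hi0]
    | succ k ih =>
      intro hm
      rw [hstep k hm, ih (Nat.lt_of_succ_lt hm), Matrix.mulVec_mulVec, ← pow_succ']
  set w := vb i1 with hw
  have hkey : w = c • ((G ^ N) *ᵥ w) := by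
    have h1 : w = (G ^ (N - 1)) *ᵥ vb i0 := hpow (N - 1) (Nat.sub_lt hN Nat.one_pos)
    rw [hbase, Matrix.mulVec_smul, Matrix.mulVec_mulVec, ← pow_succ] at h1
    rw [Nat.sub_add_cancel hN] at h1
    exact h1
  have hw0 : w ≠ 0 := by
    intro hw0
    apply hv
    have hvb0 : vb i0 = 0 := by
      rw [hbase, hw0]
      simp
    funext p
    have h := hpow (p.1 : ℕ) p.1.isLt
    have h2 : (⟨(p.1 : ℕ), p.1.isLt⟩ : Fin N) = p.1 := Fin.eta _ _
    rw [h2] at h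
    have : vb p.1 = 0 := by rw [h, hvb0, Matrix.mulVec_zero]
    calc v p = vb p.1 p.2 := rfl
    _ = 0 := by rw [this]; rfl
  have hc0 : c ≠ 0 := by
    intro hc
    rw [hc, zero_smul] at hkey
    exact hw0 hkey
  have heig : (G ^ N) *ᵥ w = c⁻¹ • w := by
    have h : c⁻¹ • w = (G ^ N) *ᵥ w := by
      conv_lhs => rw [hkey]
      rw [smul_smul, inv_mul_cancel₀ hc0, one_smul]
    exact h.symm
  have hmem : c⁻¹ ∈ spectrum ℂ (((A₀⁻¹ * M) ^ N).map Complex.ofReal) := by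
    have hmap : ((A₀⁻¹ * M) ^ N).map Complex.ofReal = G ^ N := by
      rw [mapC_pow, mapC_mul, mapC_inv _ hAdet, hG]
    rw [hmap, mem_spectrum_iff_exists']
    exact ⟨w, hw0, heig⟩
  obtain ⟨r, hr0, hr1, hrc⟩ := spec_T hN hM hK hτ hA₀ _ hmem
  refine ⟨r, hr0, hr1, ?_⟩
  rw [← hrc, mul_inv_cancel₀ hc0]

/-- Let `η ∈ (0,1)` and `ε ∈ (0,η]`.  Then every eigenvalue
`λ` (over `ℂ`) of `P_ε⁻¹ L` satisfies `|λ − 1| ≤ ε/(1−η)`. -/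
theorem statement10 (N J : ℕ) (hN : 0 < N) (hJ : 0 < J) (τ : ℝ) (hτ : 0 < τ)
    (M K : Matrix (Fin J) (Fin J) ℝ) (hM : M.PosDef) (hK : K.PosDef)
    (A₀ : Matrix (Fin J) (Fin J) ℝ) (hA₀ : A₀ = M + τ • K)
    (η : ℝ) (hη0 : 0 < η) (hη1 : η < 1)
    (ε : ℝ) (hε0 : 0 < ε) (hεη : ε ≤ η) :
    ∀ lam ∈ spectrum ℂ
        (((Pmat N J hN A₀ M ε)⁻¹ * Lmat N J A₀ M).map Complex.ofReal),
      ‖lam - 1‖ ≤ ε / (1 - η) := by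
  have hrhs : 0 ≤ ε / (1 - η) := div_nonneg hε0.le (by linarith)
  set i0 : Fin N := ⟨0, hN⟩ with hi0
  set i1 : Fin N := ⟨N - 1, Nat.sub_lt hN Nat.one_pos⟩ with hi1
  set X := Emat N J i0 * M * (Emat N J i1)ᵀ with hX
  set Lc := (Lmat N J A₀ M).map Complex.ofReal with hLc
  set Xc := X.map Complex.ofReal with hXc
  have hPmap : (Pmat N J hN A₀ M ε).map Complex.ofReal = Lc - (ε : ℂ) • Xc := by
    ext p q
    simp only [Pmat, Matrix.map_apply, Matrix.sub_apply, Matrix.smul_apply, hLc, hXc, hX, hi0, hi1,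
      smul_eq_mul, Complex.ofReal_sub, Complex.ofReal_mul]
  -- P is invertible
  have hPdet : IsUnit (Pmat N J hN A₀ M ε).det := by
    rw [isUnit_iff_ne_zero]
    intro hdet0
    have hdetC : ((Pmat N J hN A₀ M ε).map Complex.ofReal).det = 0 := by
      have h : (Complex.ofRealHom : ℝ →+* ℂ) (Pmat N J hN A₀ M ε).det
          = ((Pmat N J hN A₀ M ε).map Complex.ofReal).det := RingHom.map_det _ _
      rw [← h, hdet0]
      simp
    obtain ⟨v, hv, hv0⟩ := (Matrix.exists_mulVec_eq_zero_iff).mpr hdetC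
    rw [hPmap, Matrix.sub_mulVec, Matrix.smul_mulVec, sub_eq_zero] at hv0
    obtain ⟨r, hr0, hr1, hcr⟩ := master hN hM hK hτ hA₀ ((ε : ℂ)) v hv hv0
    have hre : ε * r = 1 := by
      have h : ((ε * r : ℝ) : ℂ) = 1 := by push_cast; exact hcr
      exact_mod_cast h
    nlinarith
  have hPcdet : IsUnit ((Pmat N J hN A₀ M ε).map Complex.ofReal).det :=
    mapC_det_isUnit hPdet
  intro lam hlam
  rw [mapC_mul, mapC_inv _ hPdet, mem_spectrum_iff_exists'] at hlam
  obtain ⟨v, hv, heig⟩ := hlam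
  set Pc := (Pmat N J hN A₀ M ε).map Complex.ofReal with hPc
  have hL : Lc *ᵥ v = lam • (Pc *ᵥ v) := by
    have h1 : Pc *ᵥ ((Pc⁻¹ * Lc) *ᵥ v) = Lc *ᵥ v := by
      rw [Matrix.mulVec_mulVec, ← Matrix.mul_assoc, Matrix.mul_nonsing_inv _ hPcdet,
        Matrix.one_mul]
    rw [← h1, heig, Matrix.mulVec_smul]
  rw [hPmap, Matrix.sub_mulVec, Matrix.smul_mulVec, smul_sub, smul_smul] at hL
  by_cases hlam1 : lam = 1
  · simp [hlam1, hrhs]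
  · have h1l : (1 : ℂ) - lam ≠ 0 := sub_ne_zero.mpr (Ne.symm hlam1)
    set c : ℂ := (1 - lam)⁻¹ * (-(lam * (ε : ℂ))) with hc
    have heqM : Lc *ᵥ v = c • (Xc *ᵥ v) := by
      funext x
      have h := congrFun hL x
      simp only [Pi.smul_apply, Pi.sub_apply, smul_eq_mul] at h ⊢
      rw [hc]
      field_simp
      linear_combination h
    obtain ⟨r, hr0, hr1, hcr⟩ := master hN hM hK hτ hA₀ c v hv heqM
    have h4 : lam * (1 - (ε : ℂ) * r) = 1 := by
      rw [hc] at hcr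
      field_simp at hcr
      linear_combination hcr
    set d : ℝ := ε * r with hd
    have hd0 : 0 < d := mul_pos hε0 hr0
    have hdε : d < ε := by
      have := mul_lt_mul_of_pos_left hr1 hε0
      simpa [hd] using this
    have hdη : d < η := lt_of_lt_of_le hdε hεη
    have hd1 : d < 1 := lt_trans hdη hη1
    have h1d : (1 : ℝ) - d ≠ 0 := by linarith
    have h1dC : (1 : ℂ) - (d : ℂ) ≠ 0 := by
      intro h
      apply h1d
      have : ((1 - d : ℝ) : ℂ) = 0 := by push_cast; linear_combination h
      exact_mod_cast this
    have h5 : lam * ((1 : ℂ) - (d : ℂ)) = 1 := by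
      rw [hd]; push_cast; linear_combination h4
    have hlam_val : lam = (((1 - d)⁻¹ : ℝ) : ℂ) := by
      rw [Complex.ofReal_inv, Complex.ofReal_sub, Complex.ofReal_one, inv_eq_one_div,
        eq_div_iff h1dC]
      exact h5
    have hdiff : lam - 1 = ((d / (1 - d) : ℝ) : ℂ) := by
      rw [hlam_val]
      push_cast
      field_simp
      ring
    rw [hdiff, Complex.norm_real, Real.norm_of_nonneg (div_nonneg hd0.le (by linarith))]
    rw [div_le_div_iff₀ (by linarith) (by linarith)]
    nlinarith

end Helpers
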